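/- Let H, K > 0 with K ≥ H, let β ∈ ℝ, and set h = ln H, k = ln K. Then for every ξ ∈ ℂ with Im ξ > 2(1 − β), the integral ∫_ℝ e^{−i·x·ξ} · (H^{−β}·e^{β·x}·(H²·e^{−x} − K)_+ · 1_{(−∞,h]}(x))² dx converges absolutely and equals 2·H^{2β}·K^{2(1−β)}·e^{−i·(2h−k)·ξ} / ((−iξ + 2β − 2)·(−iξ + 2β − 1)·(−iξ + 2β)). (Equation (hG00): the Fourier transform in log-price of the squared payoff of the exotic European option G_ex(S) = (S/H)^β·(H²/S − K)_+·1_{S ≤ H}, needed to compute second moments of the hedging portfolio.) -/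

import Mathlib

open MeasureTheory Set

lemma rexp_integrableOn_Iic {b : ℝ} (hb : 0 < b) (m : ℝ) :
    IntegrableOn (fun x : ℝ => Real.exp (b * x)) (Iic m) := by
  have h0 : IntegrableOn (fun x : ℝ => Real.exp (-b * x)) (Ioi (-m)) :=
    exp_neg_integrableOn_Ioi (-m) hb
  have h2 : Integrable ((Ioi (-m)).indicator (fun x : ℝ => Real.exp (-b * x))) :=
    (integrable_indicator_iff measurableSet_Ioi).2 h0
  have h3 := h2.comp_neg
  rw [integrableOn_Iic_iff_integrableOn_Iio, ← integrable_indicator_iff measurableSet_Iio]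
  refine Integrable.congr h3 (Filter.Eventually.of_forall fun x => ?_)
  simp only [indicator_apply, mem_Iio, mem_Ioi, neg_lt_neg_iff]
  by_cases hx : x < m
  · simp only [hx, if_true]
    ring_nf
  · simp [hx]

lemma cexp_integrableOn_Iic {c : ℂ} (hc : 0 < c.re) (m : ℝ) :
    IntegrableOn (fun x : ℝ => Complex.exp (c * x)) (Iic m) := by
  refine (rexp_integrableOn_Iic hc m).mono' ?_ ?_
  · exact (Complex.continuous_exp.comp (continuous_const.mul Complex.continuous_ofReal)).aestronglyMeasurable
  · filter_upwards with x
    rw [Complex.norm_exp]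
    simp [Complex.mul_re]

lemma integral_cexp_Iic {c : ℂ} (hc : 0 < c.re) (m : ℝ) :
    ∫ x in Iic m, Complex.exp (c * x) = Complex.exp (c * m) / c := by
  have hc0 : c ≠ 0 := fun h => by simp [h] at hc
  have hderiv : ∀ x ∈ Iic m, HasDerivAt (fun x : ℝ => Complex.exp (c * x) / c)
      (Complex.exp (c * x)) x := by
    intro x _
    have h1 : HasDerivAt (fun w : ℂ => Complex.exp (c * w) / c) (Complex.exp (c * x)) (x : ℂ) := by
      have := (((hasDerivAt_id (x : ℂ)).const_mul c).cexp).div_const c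
      simpa [mul_comm, mul_div_assoc, mul_div_cancel_left₀ _ hc0] using this
    exact h1.comp_ofReal
  have htend : Filter.Tendsto (fun x : ℝ => Complex.exp (c * x) / c) Filter.atBot (nhds 0) := by
    rw [tendsto_zero_iff_norm_tendsto_zero]
    have : (fun x : ℝ => ‖Complex.exp (c * x) / c‖) = fun x => Real.exp (c.re * x) / ‖c‖ := by
      funext x
      rw [norm_div, Complex.norm_exp]
      simp [Complex.mul_re]
    rw [this]
    have : Filter.Tendsto (fun x : ℝ => Real.exp (c.re * x)) Filter.atBot (nhds 0) :=
      Real.tendsto_exp_atBot.comp (Filter.tendsto_const_mul_atBot_of_pos hc |>.mpr Filter.tendsto_id)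
    simpa using this.div_const ‖c‖
  have := integral_Iic_of_hasDerivAt_of_tendsto' hderiv (cexp_integrableOn_Iic hc m) htend
  rw [this, sub_zero]

/-- Equation (hG00): the Fourier transform in log-price of the squared payoff of the exotic
European option `G_ex(S) = (S/H)^β·(H²/S - K)_+·1_{S ≤ H}`, needed to compute second moments
of the hedging portfolio. -/
theorem stmt_9 (H K β : ℝ) (hH : 0 < H) (hHK : H ≤ K) :
    ∀ ξ : ℂ, 2 * (1 - β) < ξ.im →
      Integrable (fun x : ℝ =>
        Complex.exp (-(Complex.I * x * ξ)) *
          (((Set.indicator (Iic (Real.log H))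
            (fun y => H ^ (-β) * Real.exp (β * y) * max (H ^ 2 * Real.exp (-y) - K) 0) x) ^ 2 : ℝ) : ℂ)) ∧
      (∫ x : ℝ, Complex.exp (-(Complex.I * x * ξ)) *
          (((Set.indicator (Iic (Real.log H))
            (fun y => H ^ (-β) * Real.exp (β * y) * max (H ^ 2 * Real.exp (-y) - K) 0) x) ^ 2 : ℝ) : ℂ))
        = 2 * ((H ^ (2 * β) : ℝ) : ℂ) * ((K ^ (2 * (1 - β)) : ℝ) : ℂ) *
            Complex.exp (-(Complex.I * ((2 * Real.log H - Real.log K : ℝ) : ℂ) * ξ)) /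
            ((-(Complex.I * ξ) + 2 * (β : ℂ) - 2) * (-(Complex.I * ξ) + 2 * (β : ℂ) - 1) *
              (-(Complex.I * ξ) + 2 * (β : ℂ))) := by
  intro ξ hξ
  have hK : 0 < K := lt_of_lt_of_le hH hHK
  set h := Real.log H with hh
  set k := Real.log K with hk
  set m : ℝ := 2 * h - k with hm
  have hmh : m ≤ h := by
    have : h ≤ k := Real.log_le_log hH hHK
    simp only [hm]; linarith
  -- complex exponents
  set c : ℝ → ℂ := fun a => 2 * (β : ℂ) - (a : ℂ) - Complex.I * ξ with hc
  have hcre : ∀ a : ℝ, (c a).re = 2 * β - a + ξ.im := by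
    intro a; simp [hc, Complex.sub_re, Complex.mul_re]
  have hpos : ∀ a : ℝ, a ≤ 2 → 0 < (c a).re := by
    intro a ha
    rw [hcre]; linarith
  -- real constants
  set Ar : ℝ := (H ^ (-β)) ^ 2 * (H ^ 2) ^ 2 with hAr
  set Br : ℝ := (H ^ (-β)) ^ 2 * (2 * H ^ 2 * K) with hBr
  set Cr : ℝ := (H ^ (-β)) ^ 2 * K ^ 2 with hCr
  set f : ℝ → ℝ := fun y => H ^ (-β) * Real.exp (β * y) * max (H ^ 2 * Real.exp (-y) - K) 0 with hf
  set G : ℝ → ℂ := fun x => (Ar : ℂ) * Complex.exp (c 2 * x) - (Br : ℂ) * Complex.exp (c 1 * x)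
      + (Cr : ℂ) * Complex.exp (c 0 * x) with hG
  have hHe : H = Real.exp h := (Real.exp_log hH).symm
  have hKe : K = Real.exp k := (Real.exp_log hK).symm
  -- pointwise identity
  have hpt : (fun x : ℝ => Complex.exp (-(Complex.I * x * ξ)) *
        (((Set.indicator (Iic h) f x) ^ 2 : ℝ) : ℂ)) = (Iic m).indicator G := by
    funext x
    by_cases hx : x ≤ m
    · rw [indicator_of_mem (mem_Iic.mpr hx), indicator_of_mem (mem_Iic.mpr (le_trans hx hmh))]
      have hmax : max (H ^ 2 * Real.exp (-x) - K) 0 = H ^ 2 * Real.exp (-x) - K := by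
        apply max_eq_left
        have h1 : Real.exp (-m) ≤ Real.exp (-x) := Real.exp_le_exp.2 (by linarith)
        have h2 : H ^ 2 * Real.exp (-m) = K := by
          rw [hHe, hKe, ← Real.exp_nat_mul, ← Real.exp_add]
          congr 1
          push_cast
          rw [hm]
          ring
        nlinarith [Real.exp_pos (-m), sq_nonneg H]
      have hsq : (f x) ^ 2 = Ar * Real.exp ((2 * β - 2) * x) - Br * Real.exp ((2 * β - 1) * x)
          + Cr * Real.exp ((2 * β - 0) * x) := by
        simp only [hf, hmax, hAr, hBr, hCr]
        rw [show (2 * β - 2) * x = β * x + β * x + (-x + -x) by ring,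
          show (2 * β - 1) * x = β * x + β * x + -x by ring,
          show (2 * β - 0) * x = β * x + β * x by ring]
        simp only [Real.exp_add]
        ring
      rw [hsq, hG]
      beta_reduce
      have key : ∀ a : ℝ, Complex.exp (c a * x) =
          ((Real.exp ((2 * β - a) * x) : ℝ) : ℂ) * Complex.exp (-(Complex.I * x * ξ)) := by
        intro a
        rw [Complex.ofReal_exp, ← Complex.exp_add]
        congr 1
        simp only [hc]
        push_cast
        ring
      rw [key 2, key 1, key 0]
      push_cast
      ring
    · rw [indicator_of_notMem (fun hc => hx (mem_Iic.mp hc))]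
      have hz : Set.indicator (Iic h) f x = 0 := by
        by_cases hxh : x ≤ h
        · rw [indicator_of_mem (mem_Iic.mpr hxh), hf]
          have hmax : max (H ^ 2 * Real.exp (-x) - K) 0 = 0 := by
            apply max_eq_right
            have h1 : Real.exp (-x) ≤ Real.exp (-m) := Real.exp_le_exp.2 (by push_neg at hx; linarith)
            have h2 : H ^ 2 * Real.exp (-m) = K := by
              rw [hHe, hKe, ← Real.exp_nat_mul, ← Real.exp_add]
              congr 1
              push_cast
              rw [hm]
              ring
            nlinarith [Real.exp_pos (-m), sq_nonneg H]
          simp [hmax]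
        · rw [indicator_of_notMem (fun hc => hxh (mem_Iic.mp hc))]
      rw [hz]
      simp
  have i2 : IntegrableOn (fun x : ℝ => (Ar : ℂ) * Complex.exp (c 2 * x)) (Iic m) :=
    (cexp_integrableOn_Iic (hpos 2 le_rfl) m).const_mul _
  have i1 : IntegrableOn (fun x : ℝ => (Br : ℂ) * Complex.exp (c 1 * x)) (Iic m) :=
    (cexp_integrableOn_Iic (hpos 1 (by norm_num)) m).const_mul _
  have i0 : IntegrableOn (fun x : ℝ => (Cr : ℂ) * Complex.exp (c 0 * x)) (Iic m) :=
    (cexp_integrableOn_Iic (hpos 0 (by norm_num)) m).const_mul _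
  constructor
  · rw [hpt, integrable_indicator_iff measurableSet_Iic]
    exact (i2.sub i1).add i0
  · rw [hpt, integral_indicator measurableSet_Iic]
    have hsplit : ∫ x in Iic m, G x =
        (Ar : ℂ) * (Complex.exp (c 2 * m) / c 2) - (Br : ℂ) * (Complex.exp (c 1 * m) / c 1)
          + (Cr : ℂ) * (Complex.exp (c 0 * m) / c 0) := by
      have i21 : IntegrableOn (fun x : ℝ => (Ar : ℂ) * Complex.exp (c 2 * x)
          - (Br : ℂ) * Complex.exp (c 1 * x)) (Iic m) := i2.sub i1
      rw [hG, integral_add i21 i0, integral_sub i2 i1, integral_const_mul, integral_const_mul, integral_const_mul,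
        integral_cexp_Iic (hpos 2 le_rfl), integral_cexp_Iic (hpos 1 (by norm_num)),
        integral_cexp_Iic (hpos 0 (by norm_num))]
    rw [hsplit]
    -- rewrite the exponentials at m
    set E : ℂ := Complex.exp (-(Complex.I * (m : ℂ) * ξ)) with hE
    have key : ∀ a : ℝ, Complex.exp (c a * m) =
        ((Real.exp ((2 * β - a) * m) : ℝ) : ℂ) * E := by
      intro a
      rw [hE, Complex.ofReal_exp, ← Complex.exp_add]
      congr 1
      simp only [hc]
      push_cast
      ring
    rw [key 2, key 1, key 0]
    -- real power computations
    have hHr : ∀ a : ℝ, H ^ a = Real.exp (a * h) := by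
      intro a; rw [hh, Real.rpow_def_of_pos hH, mul_comm]
    have hKr : ∀ a : ℝ, K ^ a = Real.exp (a * k) := by
      intro a; rw [hk, Real.rpow_def_of_pos hK, mul_comm]
    have hH2 : H ^ (2 : ℕ) = Real.exp (2 * h) := by
      rw [hHe, pow_two, ← Real.exp_add]; ring_nf
    set D : ℝ := H ^ (2 * β) * K ^ (2 * (1 - β)) with hD
    have hA : Ar * Real.exp ((2 * β - 2) * m) = D := by
      have e1 : Ar * Real.exp ((2 * β - 2) * m) = Real.exp (-β * h) * Real.exp (-β * h) *
          Real.exp (2 * h) * Real.exp (2 * h) * Real.exp ((2 * β - 2) * m) := by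
        rw [hAr, hH2, hHr, pow_two, pow_two]; ring
      rw [e1, ← Real.exp_add, ← Real.exp_add, ← Real.exp_add, ← Real.exp_add, hD, hHr, hKr,
        ← Real.exp_add, Real.exp_eq_exp, hm]
      ring
    have hB : Br * Real.exp ((2 * β - 1) * m) = 2 * D := by
      have e1 : Br * Real.exp ((2 * β - 1) * m) = 2 * (Real.exp (-β * h) * Real.exp (-β * h) *
          Real.exp (2 * h) * Real.exp k * Real.exp ((2 * β - 1) * m)) := by
        rw [hBr, hH2, hHr, hKe, pow_two]; ring
      rw [e1, ← Real.exp_add, ← Real.exp_add, ← Real.exp_add, ← Real.exp_add, hD, hHr, hKr,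
        ← Real.exp_add]
      congr 1
      rw [Real.exp_eq_exp, hm]
      ring
    have hC : Cr * Real.exp ((2 * β - 0) * m) = D := by
      have e1 : Cr * Real.exp ((2 * β - 0) * m) = Real.exp (-β * h) * Real.exp (-β * h) *
          Real.exp k * Real.exp k * Real.exp ((2 * β - 0) * m) := by
        rw [hCr, hHr, hKe, pow_two, pow_two]; ring
      rw [e1, ← Real.exp_add, ← Real.exp_add, ← Real.exp_add, ← Real.exp_add, hD, hHr, hKr,
        ← Real.exp_add, Real.exp_eq_exp, hm]
      ring
    have hrw : ∀ (r : ℝ) (a : ℝ), (r : ℂ) * (((Real.exp ((2 * β - a) * m) : ℝ) : ℂ) * E / c a)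
        = ((r * Real.exp ((2 * β - a) * m) : ℝ) : ℂ) * E / c a := by
      intro r a; push_cast; ring
    rw [hrw, hrw, hrw, hA, hB, hC]
    -- final field algebra
    have hne : ∀ a : ℝ, a ≤ 2 → c a ≠ 0 := by
      intro a ha hz
      have := hpos a ha
      rw [hz] at this
      simp at this
    have h2 : (-(Complex.I * ξ) + 2 * (β : ℂ) - 2) = c 2 := by simp only [hc]; push_cast; ring
    have h1 : (-(Complex.I * ξ) + 2 * (β : ℂ) - 1) = c 1 := by simp only [hc]; push_cast; ring
    have h0 : (-(Complex.I * ξ) + 2 * (β : ℂ)) = c 0 := by simp only [hc]; push_cast; ring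
    rw [h2, h1, h0, hD]
    field_simp [hne 2 le_rfl, hne 1 (by norm_num), hne 0 (by norm_num)]
    ring_nf
    norm_num
    simp only [hc]; push_cast; ring
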